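/- Suppose rational numbers satisfy e(M) = t·s where s = ∏_{k=1}^{g} ζ(1-2k) for some g ≥ 1, e(M) = ζ(1-2g')/(2-2g') with g' = g+1, and t is required to be an integer (t = χ_ℚ of a space). If the resulting value t = (1/(2-2g'))·∏_{k=1}^{g'-1} 1/ζ(1-2k) is not an integer, then no such integer t exists. Concretely: for g' ≥ 7, the rational number (1/(2-2g'))·∏_{k=1}^{g'-1} 1/ζ(1-2k) is not an integer. -/

import Mathlib

open Finset Real

namespace ChiTorelli

/- ## Bernoulli number values -/

lemma bodd {n : ℕ} (h1 : n % 2 = 1) (h2 : 1 < n) : bernoulli' n = 0 :=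
  bernoulli'_eq_zero_of_odd (Nat.odd_iff.2 h1) h2

lemma b2 : bernoulli' 2 = 1/6 := bernoulli'_two
lemma b4 : bernoulli' 4 = -1/30 := bernoulli'_four
lemma b6 : bernoulli' 6 = 1/42 := by
  rw [bernoulli'_def]; norm_num [Finset.sum_range_succ, bodd, b2, b4, Nat.choose]
lemma b8 : bernoulli' 8 = -1/30 := by
  rw [bernoulli'_def]; norm_num [Finset.sum_range_succ, bodd, b2, b4, b6, Nat.choose]
lemma b10 : bernoulli' 10 = 5/66 := by
  rw [bernoulli'_def]; norm_num [Finset.sum_range_succ, bodd, b2, b4, b6, b8, Nat.choose]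
lemma b12 : bernoulli' 12 = -691/2730 := by
  rw [bernoulli'_def]; norm_num [Finset.sum_range_succ, bodd, b2, b4, b6, b8, b10, Nat.choose]
lemma b14 : bernoulli' 14 = 7/6 := by
  rw [bernoulli'_def]; norm_num [Finset.sum_range_succ, bodd, b2, b4, b6, b8, b10, b12, Nat.choose]
lemma b16 : bernoulli' 16 = -3617/510 := by
  rw [bernoulli'_def]
  norm_num [Finset.sum_range_succ, bodd, b2, b4, b6, b8, b10, b12, b14, Nat.choose]
lemma b18 : bernoulli' 18 = 43867/798 := by
  rw [bernoulli'_def]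
  norm_num [Finset.sum_range_succ, bodd, b2, b4, b6, b8, b10, b12, b14, b16, Nat.choose]
lemma b20 : bernoulli' 20 = -174611/330 := by
  rw [bernoulli'_def]
  norm_num [Finset.sum_range_succ, bodd, b2, b4, b6, b8, b10, b12, b14, b16, b18, Nat.choose]
lemma b22 : bernoulli' 22 = 854513/138 := by
  rw [bernoulli'_def]
  norm_num [Finset.sum_range_succ, bodd, b2, b4, b6, b8, b10, b12, b14, b16, b18, b20, Nat.choose]
lemma b24 : bernoulli' 24 = -236364091/2730 := by
  rw [bernoulli'_def]
  norm_num [Finset.sum_range_succ, bodd, b2, b4, b6, b8, b10, b12, b14, b16, b18, b20, b22, Nat.choose]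

lemma c2 : bernoulli 2 = 1/6 := by rw [bernoulli]; norm_num [b2]
lemma c4 : bernoulli 4 = -1/30 := by rw [bernoulli]; norm_num [b4]
lemma c6 : bernoulli 6 = 1/42 := by rw [bernoulli]; norm_num [b6]
lemma c8 : bernoulli 8 = -1/30 := by rw [bernoulli]; norm_num [b8]
lemma c10 : bernoulli 10 = 5/66 := by rw [bernoulli]; norm_num [b10]
lemma c12 : bernoulli 12 = -691/2730 := by rw [bernoulli]; norm_num [b12]
lemma c14 : bernoulli 14 = 7/6 := by rw [bernoulli]; norm_num [b14]
lemma c16 : bernoulli 16 = -3617/510 := by rw [bernoulli]; norm_num [b16]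
lemma c18 : bernoulli 18 = 43867/798 := by rw [bernoulli]; norm_num [b18]
lemma c20 : bernoulli 20 = -174611/330 := by rw [bernoulli]; norm_num [b20]
lemma c22 : bernoulli 22 = 854513/138 := by rw [bernoulli]; norm_num [b22]
lemma c24 : bernoulli 24 = -236364091/2730 := by rw [bernoulli]; norm_num [b24]

/- ## Zeta values and the rational reduction -/

lemma zeta_val (m : ℕ) (hm : 1 ≤ m) :
    riemannZeta (1 - 2 * (m:ℂ)) = ((-(bernoulli (2*m)) / (2*m) : ℚ) : ℂ) := by
  have h1 : (1 - 2 * (m:ℂ)) = -((2*m - 1 : ℕ) : ℂ) := by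
    push_cast [Nat.cast_sub (by omega : 1 ≤ 2*m)]
    ring
  rw [h1, riemannZeta_neg_nat_eq_bernoulli]
  have h2 : 2*m - 1 + 1 = 2*m := by omega
  have h3 : ((-1 : ℂ)) ^ (2*m - 1) = -1 := (Nat.odd_iff.2 (by omega)).neg_one_pow
  have h4 : ((2*m-1 : ℕ):ℂ) = 2*(m:ℂ) - 1 := by
    push_cast [Nat.cast_sub (by omega : 1 ≤ 2*m)]; ring
  rw [h2, h3, h4]
  have hm0 : (m:ℂ) ≠ 0 := Nat.cast_ne_zero.2 (by omega)
  push_cast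
  field_simp
  ring

/-- The rational number in question. -/
noncomputable def Qv (g' : ℕ) : ℚ :=
  (1/(2 - 2*(g':ℚ))) * ∏ k ∈ Icc 1 (g'-1), (-(bernoulli (2*k)) / (2*k))⁻¹

lemma cast_Qv (g' : ℕ) :
    (1 / (2 - 2 * (g' : ℂ))) * ∏ k ∈ Icc 1 (g' - 1), (riemannZeta (1 - 2 * (k : ℂ)))⁻¹
      = ((Qv g' : ℚ) : ℂ) := by
  rw [Qv]
  push_cast
  congr 1
  refine Finset.prod_congr rfl fun k hk => ?_
  rw [zeta_val k (mem_Icc.1 hk).1]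
  push_cast
  ring

/- ## Lower bound for Bernoulli numbers -/

lemma bern_lb {k : ℕ} (hk : k ≠ 0) :
    2*(Nat.factorial (2*k) : ℝ) / (2*π)^(2*k) ≤ |((bernoulli (2*k) : ℚ) : ℝ)| := by
  set B : ℝ := |((bernoulli (2*k) : ℚ) : ℝ)| with hB
  have hs := hasSum_zeta_nat hk
  set R : ℝ := (-1)^(k+1) * 2^(2*k-1) * π^(2*k) * bernoulli (2*k) / (Nat.factorial (2*k) : ℝ)
    with hR
  have h1 : (1:ℝ) ≤ R := by
    have := le_hasSum hs 1 (fun i _ => by positivity)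
    simpa using this
  have habs : |R| = 2^(2*k-1) * π^(2*k) * B / (Nat.factorial (2*k) : ℝ) := by
    rw [hR, abs_div, abs_mul, abs_mul, abs_mul, abs_pow, abs_pow, abs_pow, abs_neg, abs_one,
      one_pow, one_mul, abs_two, abs_of_nonneg pi_nonneg, Nat.abs_cast]
  have h2 : (Nat.factorial (2*k) : ℝ) ≤ 2^(2*k-1) * π^(2*k) * B := by
    have h3 : (1:ℝ) ≤ |R| := h1.trans (le_abs_self R)
    rw [habs, le_div_iff₀ (by positivity : (0:ℝ) < (Nat.factorial (2*k) : ℝ))] at h3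
    linarith
  have hpow : (2*π)^(2*k) = 2 * (2^(2*k-1) * π^(2*k)) := by
    rw [mul_pow, ← mul_assoc]
    congr 1
    rw [← pow_succ']
    congr 1
    omega
  rw [div_le_iff₀ (by positivity), hpow]
  nlinarith [h2]

lemma factor_bound {k : ℕ} (hk : 1 ≤ k) :
    |(((-(bernoulli (2*k)) / (2*k) : ℚ) : ℝ))⁻¹| ≤ (k:ℝ)*(2*π)^(2*k)/(Nat.factorial (2*k) : ℝ) := by
  have hlb := bern_lb (k := k) (by omega)
  have hBpos : (0:ℝ) < |((bernoulli (2*k) : ℚ) : ℝ)| := by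
    refine lt_of_lt_of_le ?_ hlb
    positivity
  have hcast : (((-(bernoulli (2*k)) / (2*k) : ℚ) : ℝ)) =
      -((bernoulli (2*k) : ℚ) : ℝ) / (2*(k:ℝ)) := by push_cast; ring
  rw [hcast, abs_inv, abs_div, abs_neg, inv_div,
    abs_of_nonneg (by positivity : (0:ℝ) ≤ 2*(k:ℝ))]
  rw [div_le_div_iff₀ hBpos (by positivity : (0:ℝ) < (Nat.factorial (2*k) : ℝ))]
  have h2 : 2*(Nat.factorial (2*k) : ℝ) ≤ |((bernoulli (2*k) : ℚ) : ℝ)| * (2*π)^(2*k) := by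
    rw [div_le_iff₀ (by positivity : (0:ℝ) < (2*π)^(2*k))] at hlb
    linarith
  have hk' : (0:ℝ) ≤ (k:ℝ) := by positivity
  nlinarith [mul_le_mul_of_nonneg_left h2 hk']

/- ## Numeric bounds -/

lemma N1 : ∀ m : ℕ, 9 ≤ m → (m:ℝ)*(2*π)^(2*m) ≤ (Nat.factorial (2*m) : ℝ) := by
  intro m hm
  induction m, hm using Nat.le_induction with
  | base =>
    have hπ : (2*π) ≤ 6.3 := by nlinarith [pi_lt_d2]
    have h1 : (2*π)^(2*9) ≤ (6.3:ℝ)^18 := by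
      calc (2*π)^(2*9) = (2*π)^18 := by norm_num
      _ ≤ (6.3:ℝ)^18 := pow_le_pow_left₀ (by positivity) hπ 18
    calc (9:ℝ)*(2*π)^(2*9) ≤ 9 * (6.3:ℝ)^18 := by nlinarith [h1]
    _ ≤ (Nat.factorial (2*9) : ℝ) := by norm_num [Nat.factorial]
  | succ n hn ih =>
    have hπ : (2*π)^2 ≤ 40 := by nlinarith [pi_lt_d2, pi_pos]
    set A : ℝ := (2*π)^(2*n) with hA'
    have hA : (0:ℝ) ≤ A := by positivity
    set F : ℝ := (Nat.factorial (2*n) : ℝ) with hF'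
    have hfpos : (0:ℝ) < F := by positivity
    have hn' : (9:ℝ) ≤ (n:ℝ) := by exact_mod_cast hn
    have hfact : (Nat.factorial (2*(n+1)) : ℝ) = (2*(n:ℝ)+2)*((2*(n:ℝ)+1)*F) := by
      have h : 2*(n+1) = (2*n+1) + 1 := by omega
      rw [h, Nat.factorial_succ, Nat.factorial_succ]
      push_cast [hF']; ring
    have hpow : (2*π)^(2*(n+1)) = (2*π)^2 * A := by
      rw [hA', ← pow_add]; congr 1; omega
    rw [hfact, hpow]
    have e1 : ((n:ℝ)+1)*((2*π)^2*A) ≤ ((n:ℝ)+1)*(40*A) :=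
      mul_le_mul_of_nonneg_left (mul_le_mul_of_nonneg_right hπ hA) (by linarith)
    have e2 : ((n:ℝ)+1)*(40*A) ≤ 80*((n:ℝ)*A) := by nlinarith [hA, hn']
    have e3 : (80:ℝ)*((n:ℝ)*A) ≤ 80*F := by linarith [ih]
    have e4 : (80:ℝ)*F ≤ (2*(n:ℝ)+2)*((2*(n:ℝ)+1)*F) := by
      nlinarith [mul_le_mul_of_nonneg_right (show (80:ℝ) ≤ (2*(n:ℝ)+2)*(2*(n:ℝ)+1) by
        nlinarith [hn']) (le_of_lt hfpos)]
    push_cast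
    linarith [e1, e2, e3, e4]

lemma N2 : ∀ n : ℕ, 13 ≤ n →
    ∏ k ∈ Icc 1 n, ((k:ℝ)*(2*π)^(2*k)/(Nat.factorial (2*k) : ℝ)) < 26 := by
  intro n hn
  induction n, hn using Nat.le_induction with
  | base =>
    have hπ : (2*π) ≤ 6.3 := by nlinarith [pi_lt_d2]
    have hle : (∏ k ∈ Icc (1:ℕ) 13, ((k:ℝ)*(2*π)^(2*k)/(Nat.factorial (2*k) : ℝ)))
        ≤ ∏ k ∈ Icc (1:ℕ) 13, ((k:ℝ)*(6.3:ℝ)^(2*k)/(Nat.factorial (2*k) : ℝ)) := by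
      refine Finset.prod_le_prod (fun i _ => by positivity) (fun i hi => ?_)
      have h1 : (2*π)^(2*i) ≤ (6.3:ℝ)^(2*i) := pow_le_pow_left₀ (by positivity) hπ _
      have h2 : (0:ℝ) ≤ (i:ℝ) := by positivity
      have h3 : (0:ℝ) < (Nat.factorial (2*i) : ℝ) := by positivity
      apply div_le_div_of_nonneg_right ?_ h3.le
      exact mul_le_mul_of_nonneg_left h1 h2
    refine lt_of_le_of_lt hle ?_
    rw [show Icc (1:ℕ) 13 = {1,2,3,4,5,6,7,8,9,10,11,12,13} by rfl]
    rw [Finset.prod_insert (by decide), Finset.prod_insert (by decide),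
      Finset.prod_insert (by decide), Finset.prod_insert (by decide),
      Finset.prod_insert (by decide), Finset.prod_insert (by decide),
      Finset.prod_insert (by decide), Finset.prod_insert (by decide),
      Finset.prod_insert (by decide), Finset.prod_insert (by decide),
      Finset.prod_insert (by decide), Finset.prod_insert (by decide),
      Finset.prod_singleton]
    norm_num [Nat.factorial]
  | succ n hn ih =>
    rw [Finset.prod_Icc_succ_top (by omega : 1 ≤ n+1)]
    have h1 : ((n+1:ℕ):ℝ)*(2*π)^(2*(n+1))/(Nat.factorial (2*(n+1)) : ℝ) ≤ 1 := by
      rw [div_le_one (by positivity)]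
      have := N1 (n+1) (by omega)
      exact_mod_cast this
    have h0 : (0:ℝ) ≤ ∏ k ∈ Icc 1 n, ((k:ℝ)*(2*π)^(2*k)/(Nat.factorial (2*k) : ℝ)) :=
      Finset.prod_nonneg fun k _ => by positivity
    calc (∏ k ∈ Icc 1 n, ((k:ℝ)*(2*π)^(2*k)/(Nat.factorial (2*k) : ℝ))) *
          (((n+1:ℕ):ℝ)*(2*π)^(2*(n+1))/(Nat.factorial (2*(n+1)) : ℝ))
        ≤ (∏ k ∈ Icc 1 n, ((k:ℝ)*(2*π)^(2*k)/(Nat.factorial (2*k) : ℝ))) * 1 :=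
          mul_le_mul_of_nonneg_left h1 h0
      _ < 26 := by rw [mul_one]; exact ih

lemma vq7 : Qv 7 = 31384184832000/691 := by
  rw [Qv, show Icc (1:ℕ) (7-1) = {1,2,3,4,5,6} from rfl,
    Finset.prod_insert (by decide),
    Finset.prod_insert (by decide),
    Finset.prod_insert (by decide),
    Finset.prod_insert (by decide),
    Finset.prod_insert (by decide),
    Finset.prod_singleton]
  norm_num [c2, c4, c6, c8, c10, c12]

lemma vq8 : Qv 8 = -322808758272000/691 := by
  rw [Qv, show Icc (1:ℕ) (8-1) = {1,2,3,4,5,6,7} from rfl,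
    Finset.prod_insert (by decide),
    Finset.prod_insert (by decide),
    Finset.prod_insert (by decide),
    Finset.prod_insert (by decide),
    Finset.prod_insert (by decide),
    Finset.prod_insert (by decide),
    Finset.prod_singleton]
  norm_num [c2, c4, c6, c8, c10, c12, c14]

lemma vq9 : Qv 9 = -2304854534062080000/2499347 := by
  rw [Qv, show Icc (1:ℕ) (9-1) = {1,2,3,4,5,6,7,8} from rfl,
    Finset.prod_insert (by decide),
    Finset.prod_insert (by decide),
    Finset.prod_insert (by decide),
    Finset.prod_insert (by decide),
    Finset.prod_insert (by decide),
    Finset.prod_insert (by decide),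
    Finset.prod_insert (by decide),
    Finset.prod_singleton]
  norm_num [c2, c4, c6, c8, c10, c12, c14, c16]

lemma vq10 : Qv 10 = 29428382690904637440000/109638854849 := by
  rw [Qv, show Icc (1:ℕ) (10-1) = {1,2,3,4,5,6,7,8,9} from rfl,
    Finset.prod_insert (by decide),
    Finset.prod_insert (by decide),
    Finset.prod_insert (by decide),
    Finset.prod_insert (by decide),
    Finset.prod_insert (by decide),
    Finset.prod_insert (by decide),
    Finset.prod_insert (by decide),
    Finset.prod_insert (by decide),
    Finset.prod_singleton]
  norm_num [c2, c4, c6, c8, c10, c12, c14, c16, c18]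

lemma vq11 : Qv 11 = 174804593183973546393600000/19144150084038739 := by
  rw [Qv, show Icc (1:ℕ) (11-1) = {1,2,3,4,5,6,7,8,9,10} from rfl,
    Finset.prod_insert (by decide),
    Finset.prod_insert (by decide),
    Finset.prod_insert (by decide),
    Finset.prod_insert (by decide),
    Finset.prod_insert (by decide),
    Finset.prod_insert (by decide),
    Finset.prod_insert (by decide),
    Finset.prod_insert (by decide),
    Finset.prod_insert (by decide),
    Finset.prod_singleton]
  norm_num [c2, c4, c6, c8, c10, c12, c14, c16, c18, c20]

lemma vq12 : Qv 12 = -43860061562524271640576000000/1487175010978381361737 := by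
  rw [Qv, show Icc (1:ℕ) (12-1) = {1,2,3,4,5,6,7,8,9,10,11} from rfl,
    Finset.prod_insert (by decide),
    Finset.prod_insert (by decide),
    Finset.prod_insert (by decide),
    Finset.prod_insert (by decide),
    Finset.prod_insert (by decide),
    Finset.prod_insert (by decide),
    Finset.prod_insert (by decide),
    Finset.prod_insert (by decide),
    Finset.prod_insert (by decide),
    Finset.prod_insert (by decide),
    Finset.prod_singleton]
  norm_num [c2, c4, c6, c8, c10, c12, c14, c16, c18, c20, c22]

lemma vq13 : Qv 13 = -2634235297445207754732994560000000/351514769627820131218308186067 := by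
  rw [Qv, show Icc (1:ℕ) (13-1) = {1,2,3,4,5,6,7,8,9,10,11,12} from rfl,
    Finset.prod_insert (by decide),
    Finset.prod_insert (by decide),
    Finset.prod_insert (by decide),
    Finset.prod_insert (by decide),
    Finset.prod_insert (by decide),
    Finset.prod_insert (by decide),
    Finset.prod_insert (by decide),
    Finset.prod_insert (by decide),
    Finset.prod_insert (by decide),
    Finset.prod_insert (by decide),
    Finset.prod_insert (by decide),
    Finset.prod_singleton]
  norm_num [c2, c4, c6, c8, c10, c12, c14, c16, c18, c20, c22, c24]

lemma bern_ne {k : ℕ} (hk : 1 ≤ k) : (bernoulli (2*k) : ℚ) ≠ 0 := by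
  intro h
  have h1 := bern_lb (k := k) (by omega)
  rw [h] at h1
  simp only [Rat.cast_zero, abs_zero] at h1
  have h2 : (0:ℝ) < 2*(Nat.factorial (2*k) : ℝ) / (2*π)^(2*k) := by positivity
  linarith

lemma Qv_ne_zero {g' : ℕ} (hg : 14 ≤ g') : Qv g' ≠ 0 := by
  rw [Qv]
  apply mul_ne_zero
  · apply one_div_ne_zero
    have h : (14:ℚ) ≤ (g' : ℚ) := by exact_mod_cast hg
    intro h0
    nlinarith
  · rw [Finset.prod_ne_zero_iff]
    intro k hk
    have hk1 : 1 ≤ k := (mem_Icc.1 hk).1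
    apply inv_ne_zero
    apply div_ne_zero
    · exact neg_ne_zero.2 (bern_ne hk1)
    · have h1 : (1:ℚ) ≤ (k:ℚ) := by exact_mod_cast hk1
      exact ne_of_gt (by linarith : (0:ℚ) < 2*(k:ℚ))

lemma Qv_abs_lt_one {g' : ℕ} (hg : 14 ≤ g') : |((Qv g' : ℚ) : ℝ)| < 1 := by
  have hg13 : 13 ≤ g' - 1 := by omega
  have hcast : ((Qv g' : ℚ) : ℝ) = ((1/(2 - 2*(g':ℚ)) : ℚ) : ℝ) *
      ∏ k ∈ Icc 1 (g'-1), (((-(bernoulli (2*k)) / (2*k) : ℚ) : ℝ))⁻¹ := by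
    rw [Qv, Rat.cast_mul, Rat.cast_prod]
    simp only [Rat.cast_inv]
  rw [hcast, abs_mul, Finset.abs_prod]
  have ha : |((1/(2 - 2*(g':ℚ)) : ℚ) : ℝ)| = 1/(2*(g':ℝ) - 2) := by
    have hge : (14:ℝ) ≤ (g':ℝ) := by exact_mod_cast hg
    push_cast
    rw [abs_div, abs_one, abs_of_neg (by linarith : (2 - 2*(g':ℝ)) < 0)]
    ring_nf
  have hP : ∏ k ∈ Icc 1 (g'-1), |(((-(bernoulli (2*k)) / (2*k) : ℚ) : ℝ))⁻¹| < 26 := by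
    refine lt_of_le_of_lt (Finset.prod_le_prod (fun k _ => abs_nonneg _)
      (fun k hk => factor_bound (mem_Icc.1 hk).1)) ?_
    exact N2 (g'-1) hg13
  have hP0 : (0:ℝ) ≤ ∏ k ∈ Icc 1 (g'-1), |(((-(bernoulli (2*k)) / (2*k) : ℚ) : ℝ))⁻¹| :=
    Finset.prod_nonneg fun k _ => abs_nonneg _
  rw [ha]
  have hge : (14:ℝ) ≤ (g':ℝ) := by exact_mod_cast hg
  have hapos : (0:ℝ) < 1/(2*(g':ℝ) - 2) := div_pos one_pos (by linarith)
  have h26 : (26:ℝ) ≤ 2*(g':ℝ) - 2 := by linarith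
  calc (1/(2*(g':ℝ) - 2)) * ∏ k ∈ Icc 1 (g'-1), |(((-(bernoulli (2*k)) / (2*k) : ℚ) : ℝ))⁻¹|
      < (1/(2*(g':ℝ) - 2)) * 26 := by
        exact mul_lt_mul_of_pos_left hP hapos
    _ ≤ 1 := by
        rw [div_mul_eq_mul_div, one_mul, div_le_one (by linarith)]
        linarith

end ChiTorelli

open ChiTorelli in
/-- For `g' ≥ 7`, the rational number `(1/(2-2g'))·∏_{k=1}^{g'-1} 1/ζ(1-2k)`
is not an integer. -/
theorem chi_torelli_not_integer (g' : ℕ) (hg : 7 ≤ g') :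
    ¬∃ z : ℤ, (1 / (2 - 2 * (g' : ℂ))) *
        ∏ k ∈ Icc 1 (g' - 1), (riemannZeta (1 - 2 * (k : ℂ)))⁻¹ = (z : ℂ) := by
  rintro ⟨z, hz⟩
  rw [cast_Qv] at hz
  have hq : Qv g' = (z:ℚ) := by exact_mod_cast hz
  rcases lt_or_ge g' 14 with hlt | hge
  · interval_cases g'
    · rw [vq7] at hq
      have h1 : (691:ℚ) * z = 31384184832000 := by rw [← hq]; norm_num
      have h2 : (691:ℤ) * z = 31384184832000 := by exact_mod_cast h1
      omega
    · rw [vq8] at hq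
      have h1 : (691:ℚ) * z = -322808758272000 := by rw [← hq]; norm_num
      have h2 : (691:ℤ) * z = -322808758272000 := by exact_mod_cast h1
      omega
    · rw [vq9] at hq
      have h1 : (2499347:ℚ) * z = -2304854534062080000 := by rw [← hq]; norm_num
      have h2 : (2499347:ℤ) * z = -2304854534062080000 := by exact_mod_cast h1
      omega
    · rw [vq10] at hq
      have h1 : (109638854849:ℚ) * z = 29428382690904637440000 := by rw [← hq]; norm_num
      have h2 : (109638854849:ℤ) * z = 29428382690904637440000 := by exact_mod_cast h1
      omega
    · rw [vq11] at hq
      have h1 : (19144150084038739:ℚ) * z = 174804593183973546393600000 := by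
        rw [← hq]; norm_num
      have h2 : (19144150084038739:ℤ) * z = 174804593183973546393600000 := by exact_mod_cast h1
      omega
    · rw [vq12] at hq
      have h1 : (1487175010978381361737:ℚ) * z = -43860061562524271640576000000 := by
        rw [← hq]; norm_num
      have h2 : (1487175010978381361737:ℤ) * z = -43860061562524271640576000000 := by
        exact_mod_cast h1
      omega
    · rw [vq13] at hq
      have h1 : (351514769627820131218308186067:ℚ) * z
          = -2634235297445207754732994560000000 := by rw [← hq]; norm_num
      have h2 : (351514769627820131218308186067:ℤ) * z
          = -2634235297445207754732994560000000 := by exact_mod_cast h1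
      omega
  · have hne := Qv_ne_zero hge
    have habs := Qv_abs_lt_one hge
    rw [hq] at habs
    have hz0 : z ≠ 0 := by
      intro h
      rw [h] at hq
      exact hne (by simpa using hq)
    have h1 : (1:ℝ) ≤ |(((z:ℚ)) : ℝ)| := by
      have h2 : (1:ℤ) ≤ |z| := Int.one_le_abs hz0
      have h3 : (((z:ℚ)) : ℝ) = ((z:ℤ) : ℝ) := by push_cast; rfl
      rw [h3, ← Int.cast_abs]
      exact_mod_cast h2
    linarith
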